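/- Let W = {w ∈ ℝ² : ‖w‖ ≤ 5}. For every 0 < θ₂ ≤ 1 and 0 < θ₁ ≤ 0.025·θ₂, there exists a nonnegative convex function F : W → ℝ that is 1-Lipschitz and has 1-Lipschitz gradient, such that F((0, θ₂)) = F((θ₁, θ₂)) = 0, and for every horizon T and step size 0 < η < 1, the averaged gradient-descent iterate w_F on F satisfies ‖w_F − (θ₁, θ₂)‖ ≤ 2640/(ηT). (Thus GD converges to the minimizer (θ₁, θ₂) even though (0, θ₂) is a minimizer of F strictly closer to the initialization 0.) -/

import Mathlib

set_option maxHeartbeats 4000000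


/- STATEMENT 5: GD need not converge to the minimal-norm solution.
   GD on `F : W → ℝ` (W = closed ball of radius 5 in ℝ²) with step size η starts at
   w⁽¹⁾ = 0, iterates w⁽ᵗ⁺¹⁾ = Π_W(w⁽ᵗ⁾ − η∇F(w⁽ᵗ⁾)), and outputs the average of
   w⁽¹⁾, …, w⁽ᵀ⁾. -/

open MeasureTheory Metric

noncomputable section

abbrev Euc (d : ℕ) := EuclideanSpace ℝ (Fin d)

/-- The point `(x, y) ∈ ℝ²`. -/
def toE2 (x y : ℝ) : Euc 2 := (WithLp.equiv 2 (Fin 2 → ℝ)).symm ![x, y]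

/-- Euclidean projection onto the closed ball of radius `R` centered at the origin. -/
def projB {d : ℕ} (R : ℝ) (w : Euc d) : Euc d := if ‖w‖ ≤ R then w else (R / ‖w‖) • w

/-- `gdIter R η g t` is the `(t+1)`-st iterate `w⁽ᵗ⁺¹⁾` of projected gradient descent
started at `w⁽¹⁾ = 0`, where `g t` is the gradient field used at step `t`. -/
def gdIter {d : ℕ} (R η : ℝ) (g : ℕ → Euc d → Euc d) : ℕ → Euc d
  | 0 => 0
  | t + 1 => projB R (gdIter R η g t - η • g t (gdIter R η g t))

/-- The averaged iterate `(1/T) ∑_{t=1}^T w⁽ᵗ⁾`. -/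
def gdAvg {d : ℕ} (R η : ℝ) (g : ℕ → Euc d → Euc d) (T : ℕ) : Euc d :=
  (T : ℝ)⁻¹ • ∑ t ∈ Finset.range T, gdIter R η g t

/-- The output of gradient descent on the single function `F`, projected onto the
ball of radius 5, after `T` steps with step size `η`. -/
def gdOut (F : Euc 2 → ℝ) (η : ℝ) (T : ℕ) : Euc 2 :=
  gdAvg 5 η (fun _ w => gradient F w) T

/- Auxiliary definitions and lemmas -/

def rl (s : ℝ) : ℝ := max s 0
def qf (s : ℝ) : ℝ := rl s ^ 2

lemma rl_nonneg (s : ℝ) : 0 ≤ rl s := le_max_right _ _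
lemma rl_mono : Monotone rl := fun _ _ h => max_le_max h le_rfl
lemma rl_lip (s t : ℝ) : |rl s - rl t| ≤ |s - t| := abs_max_sub_max_le_abs _ _ _
lemma rl_le_abs (s : ℝ) : rl s ≤ |s| := max_le (le_abs_self s) (abs_nonneg s)
lemma rl_of_nonpos {s : ℝ} (h : s ≤ 0) : rl s = 0 := max_eq_right h
lemma rl_of_nonneg {s : ℝ} (h : 0 ≤ s) : rl s = s := max_eq_left h
lemma rl_ge (s : ℝ) : s ≤ rl s := le_max_left _ _
lemma qf_nonneg (s : ℝ) : 0 ≤ qf s := sq_nonneg _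

lemma hasDerivAt_qf (s : ℝ) : HasDerivAt qf (2 * rl s) s := by
  rcases lt_trichotomy s 0 with h | h | h
  · have h0 : HasDerivAt (fun _ : ℝ => (0:ℝ)) 0 s := hasDerivAt_const _ _
    have he : qf =ᶠ[nhds s] (fun _ : ℝ => (0:ℝ)) := by
      filter_upwards [Iio_mem_nhds h] with t ht
      simp [qf, rl_of_nonpos (le_of_lt ht)]
    rw [rl_of_nonpos h.le, mul_zero]
    exact h0.congr_of_eventuallyEq he
  · subst h
    rw [rl_of_nonpos le_rfl, mul_zero]
    rw [hasDerivAt_iff_isLittleO]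
    have hq0 : qf 0 = 0 := by simp [qf, rl]
    simp only [smul_zero, sub_zero, hq0]
    rw [Asymptotics.isLittleO_iff]
    intro c hc
    filter_upwards [Metric.ball_mem_nhds 0 hc] with t ht
    simp only [Metric.mem_ball, Real.dist_eq, sub_zero] at ht
    have h1 : |qf t| = rl t ^ 2 := abs_of_nonneg (qf_nonneg t)
    have h2 : rl t ≤ |t| := rl_le_abs t
    calc ‖qf t‖ = rl t ^ 2 := h1
      _ ≤ |t| * |t| := by nlinarith [rl_nonneg t, abs_nonneg t]
      _ ≤ c * ‖t‖ := by
          rw [Real.norm_eq_abs]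
          nlinarith [abs_nonneg t]
  · have hpow : HasDerivAt (fun t : ℝ => t ^ 2) (2 * s) s := by
      simpa using (hasDerivAt_pow 2 s)
    have he : qf =ᶠ[nhds s] (fun t : ℝ => t ^ 2) := by
      filter_upwards [Ioi_mem_nhds h] with t ht
      simp [qf, rl_of_nonneg (le_of_lt ht)]
    rw [rl_of_nonneg h.le]
    exact hpow.congr_of_eventuallyEq he

lemma convexOn_qf : ConvexOn ℝ Set.univ qf := by
  have hdiff : Differentiable ℝ qf := fun s => (hasDerivAt_qf s).differentiableAt
  have hderiv : deriv qf = fun s => 2 * rl s := by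
    funext s; exact (hasDerivAt_qf s).deriv
  apply Monotone.convexOn_univ_of_deriv hdiff
  rw [hderiv]
  intro a b h
  dsimp only
  have := rl_mono h
  linarith

lemma qf_lip {M s t : ℝ} (hs : rl s ≤ M) (ht : rl t ≤ M) : |qf s - qf t| ≤ 2 * M * |s - t| := by
  have h1 : qf s - qf t = (rl s + rl t) * (rl s - rl t) := by simp [qf]; ring
  rw [h1, abs_mul]
  have h2 : |rl s + rl t| ≤ 2 * M := by
    rw [abs_of_nonneg (by linarith [rl_nonneg s, rl_nonneg t])]; linarith
  have h3 := rl_lip s t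
  have h4 : (0:ℝ) ≤ 2 * M := by have := (rl_nonneg s).trans hs; linarith
  calc |rl s + rl t| * |rl s - rl t| ≤ (2 * M) * |s - t| :=
        mul_le_mul h2 h3 (abs_nonneg _) h4
    _ = 2 * M * |s - t| := by ring

lemma euc2_ext {w v : Euc 2} (h0 : w 0 = v 0) (h1 : w 1 = v 1) : w = v := by
  ext i; fin_cases i <;> assumption

@[simp] lemma toE2_apply0 (x y : ℝ) : toE2 x y 0 = x := rfl
@[simp] lemma toE2_apply1 (x y : ℝ) : toE2 x y 1 = y := rfl

lemma euc2_norm_le (w : Euc 2) : ‖w‖ ≤ |w 0| + |w 1| := by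
  rw [EuclideanSpace.norm_eq]
  simp only [Real.norm_eq_abs, Fin.sum_univ_two]
  have h1 : |w 0| ^ 2 + |w 1| ^ 2 ≤ (|w 0| + |w 1|) ^ 2 := by
    nlinarith [abs_nonneg (w 0), abs_nonneg (w 1)]
  calc Real.sqrt (|w 0| ^ 2 + |w 1| ^ 2) ≤ Real.sqrt ((|w 0| + |w 1|) ^ 2) :=
        Real.sqrt_le_sqrt h1
    _ = |w 0| + |w 1| := Real.sqrt_sq (by positivity)

lemma euc2_coord_le (w : Euc 2) (i : Fin 2) : |w i| ≤ ‖w‖ := by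
  rw [EuclideanSpace.norm_eq]
  simp only [Real.norm_eq_abs, Fin.sum_univ_two]
  have h0 : |w i| = Real.sqrt (|w i| ^ 2) := (Real.sqrt_sq (abs_nonneg _)).symm
  rw [h0]
  apply Real.sqrt_le_sqrt
  fin_cases i <;> simp <;> nlinarith [sq_nonneg (w 0), sq_nonneg (w 1)]

def c0 : ℝ := 1/40
def Ff (θ₁ θ₂ : ℝ) (w : Euc 2) : ℝ :=
  c0/2 * (qf (θ₂ - w 1 - w 0) + qf (w 0 - θ₁) + qf (θ₂ - w 1))
def Gf (θ₁ θ₂ : ℝ) (w : Euc 2) : Euc 2 :=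
  toE2 (c0 * (rl (w 0 - θ₁) - rl (θ₂ - w 1 - w 0)))
       (-(c0 * (rl (θ₂ - w 1 - w 0) + rl (θ₂ - w 1))))

lemma toDual_apply_E2 (α β : ℝ) (v : Euc 2) :
    (InnerProductSpace.toDual ℝ (Euc 2)) (toE2 α β) v = α * v 0 + β * v 1 := by
  simp [InnerProductSpace.toDual_apply_apply, PiLp.inner_apply, Fin.sum_univ_two, RCLike.inner_apply,
    conj_trivial]
  ring

lemma hasGradientAt_affQ (α β γ : ℝ) (w : Euc 2) :
    HasGradientAt (fun v : Euc 2 => qf (α * v 0 + β * v 1 + γ))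
      ((2 * rl (α * w 0 + β * w 1 + γ)) • toE2 α β) w := by
  set n := toE2 α β with hn
  have hfun : (fun v : Euc 2 => α * v 0 + β * v 1 + γ)
      = fun v => (InnerProductSpace.toDual ℝ (Euc 2)) n v + γ := by
    funext v; rw [toDual_apply_E2]
  have hlin : HasFDerivAt (fun v : Euc 2 => α * v 0 + β * v 1 + γ)
      (((InnerProductSpace.toDual ℝ (Euc 2)) n : Euc 2 →L[ℝ] ℝ)) w := by
    rw [hfun]
    exact (((InnerProductSpace.toDual ℝ (Euc 2)) n : Euc 2 →L[ℝ] ℝ).hasFDerivAt).add_const γ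
  have hq := (hasDerivAt_qf (α * w 0 + β * w 1 + γ)).comp_hasFDerivAt w hlin
  have := hq.hasGradientAt
  simpa [Function.comp_def] using this

lemma hasGradientAt_Ff (θ₁ θ₂ : ℝ) (w : Euc 2) :
    HasGradientAt (Ff θ₁ θ₂) (Gf θ₁ θ₂ w) w := by
  have h1 := hasGradientAt_affQ (-1) (-1) θ₂ w
  have h2 := hasGradientAt_affQ 1 0 (-θ₁) w
  have h3 := hasGradientAt_affQ 0 (-1) θ₂ w
  rw [hasGradientAt_iff_hasFDerivAt] at h1 h2 h3 ⊢
  have hsum := ((h1.add h2).add h3).const_smul (c0/2)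
  have hfun : (fun v : Euc 2 => (c0/2) •
      ((qf (-1 * v 0 + -1 * v 1 + θ₂) + qf (1 * v 0 + 0 * v 1 + -θ₁)) + qf (0 * v 0 + -1 * v 1 + θ₂)))
      = Ff θ₁ θ₂ := by
    funext v
    simp only [Ff, smul_eq_mul]
    rw [show -1 * v 0 + -1 * v 1 + θ₂ = θ₂ - v 1 - v 0 by ring,
        show 1 * v 0 + 0 * v 1 + -θ₁ = v 0 - θ₁ by ring,
        show 0 * v 0 + -1 * v 1 + θ₂ = θ₂ - v 1 by ring]
  rw [← hfun]
  have hvec : Gf θ₁ θ₂ w = (c0/2) • ((2 * rl (-1 * w 0 + -1 * w 1 + θ₂)) • toE2 (-1) (-1)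
      + (2 * rl (1 * w 0 + 0 * w 1 + -θ₁)) • toE2 1 0
      + (2 * rl (0 * w 0 + -1 * w 1 + θ₂)) • toE2 0 (-1)) := by
    apply euc2_ext <;>
    · simp only [Gf, PiLp.add_apply, PiLp.smul_apply, smul_eq_mul, toE2_apply0, toE2_apply1]
      rw [show -1 * w 0 + -1 * w 1 + θ₂ = θ₂ - w 1 - w 0 by ring,
          show 1 * w 0 + 0 * w 1 + -θ₁ = w 0 - θ₁ by ring,
          show 0 * w 0 + -1 * w 1 + θ₂ = θ₂ - w 1 by ring]
      ring
  rw [hvec, _root_.map_smul, map_add, map_add]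
  exact hsum

lemma gradient_Ff (θ₁ θ₂ : ℝ) (w : Euc 2) : gradient (Ff θ₁ θ₂) w = Gf θ₁ θ₂ w :=
  (hasGradientAt_Ff θ₁ θ₂ w).gradient

lemma convexOn_qf_aff (α β γ : ℝ) :
    ConvexOn ℝ Set.univ (fun w : Euc 2 => qf (α * w 0 + β * w 1 + γ)) := by
  constructor
  · exact convex_univ
  · intro x _ y _ a b ha hb hab
    have h := convexOn_qf.2 (Set.mem_univ (α * x 0 + β * x 1 + γ))
      (Set.mem_univ (α * y 0 + β * y 1 + γ)) ha hb hab
    dsimp only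
    have harg : α * (a • x + b • y) 0 + β * (a • x + b • y) 1 + γ
        = a * (α * x 0 + β * x 1 + γ) + b * (α * y 0 + β * y 1 + γ) := by
      simp only [PiLp.add_apply, PiLp.smul_apply, smul_eq_mul]
      linear_combination (-γ) * hab
    rw [harg]
    simpa using h

lemma Ff_convex (θ₁ θ₂ : ℝ) : ConvexOn ℝ (closedBall 0 5) (Ff θ₁ θ₂) := by
  have h1 := convexOn_qf_aff (-1) (-1) θ₂
  have h2 := convexOn_qf_aff 1 0 (-θ₁)
  have h3 := convexOn_qf_aff 0 (-1) θ₂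
  have hsum := ((h1.add h2).add h3).smul (c := c0/2) (by rw [c0]; norm_num)
  have hsum' : ConvexOn ℝ Set.univ (Ff θ₁ θ₂) := by
    refine (congrArg (ConvexOn ℝ Set.univ) ?_).mpr hsum
    funext v
    simp only [Ff, Pi.add_apply, smul_eq_mul]
    rw [show θ₂ - v 1 - v 0 = -1 * v 0 + -1 * v 1 + θ₂ by ring,
        show v 0 - θ₁ = 1 * v 0 + 0 * v 1 + -θ₁ by ring,
        show θ₂ - v 1 = 0 * v 0 + -1 * v 1 + θ₂ by ring]
  exact hsum'.subset (Set.subset_univ _) (convex_closedBall _ _)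

lemma Ff_lip (θ₁ θ₂ : ℝ) (h1 : 0 ≤ θ₁) (hθ₁₂ : θ₁ ≤ θ₂) (h2 : θ₂ ≤ 1) :
    LipschitzOnWith 1 (Ff θ₁ θ₂) (closedBall 0 5) := by
  apply LipschitzOnWith.of_dist_le_mul
  intro x hx y hy
  rw [Metric.mem_closedBall, dist_zero_right] at hx hy
  have hx0 : |x 0| ≤ 5 := le_trans (euc2_coord_le x 0) hx
  have hx1 : |x 1| ≤ 5 := le_trans (euc2_coord_le x 1) hx
  have hy0 : |y 0| ≤ 5 := le_trans (euc2_coord_le y 0) hy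
  have hy1 : |y 1| ≤ 5 := le_trans (euc2_coord_le y 1) hy
  have hd0 : |x 0 - y 0| ≤ dist x y := by
    rw [dist_eq_norm]
    exact le_trans (le_of_eq (by rw [PiLp.sub_apply])) (euc2_coord_le (x - y) 0)
  have hd1 : |x 1 - y 1| ≤ dist x y := by
    rw [dist_eq_norm]
    exact le_trans (le_of_eq (by rw [PiLp.sub_apply])) (euc2_coord_le (x - y) 1)
  have hθ₂' : (0:ℝ) ≤ θ₂ := le_trans h1 hθ₁₂
  have hM1x : rl (θ₂ - x 1 - x 0) ≤ 11 := by
    refine le_trans (rl_le_abs _) ?_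
    have := abs_sub_abs_le_abs_sub (θ₂ - x 1 - x 0) 0
    rw [abs_le] at hx0 hx1 ⊢
    constructor <;> nlinarith
  have hM1y : rl (θ₂ - y 1 - y 0) ≤ 11 := by
    refine le_trans (rl_le_abs _) ?_
    rw [abs_le] at hy0 hy1 ⊢
    constructor <;> nlinarith
  have hM2x : rl (x 0 - θ₁) ≤ 6 := by
    refine le_trans (rl_le_abs _) ?_
    rw [abs_le] at hx0 ⊢
    constructor <;> nlinarith
  have hM2y : rl (y 0 - θ₁) ≤ 6 := by
    refine le_trans (rl_le_abs _) ?_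
    rw [abs_le] at hy0 ⊢
    constructor <;> nlinarith
  have hM3x : rl (θ₂ - x 1) ≤ 6 := by
    refine le_trans (rl_le_abs _) ?_
    rw [abs_le] at hx1 ⊢
    constructor <;> nlinarith
  have hM3y : rl (θ₂ - y 1) ≤ 6 := by
    refine le_trans (rl_le_abs _) ?_
    rw [abs_le] at hy1 ⊢
    constructor <;> nlinarith
  have hq1 := qf_lip hM1x hM1y
  have hq2 := qf_lip hM2x hM2y
  have hq3 := qf_lip hM3x hM3y
  have ha1 : |(θ₂ - x 1 - x 0) - (θ₂ - y 1 - y 0)| ≤ 2 * dist x y := by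
    have : (θ₂ - x 1 - x 0) - (θ₂ - y 1 - y 0) = -((x 1 - y 1)) + -((x 0 - y 0)) := by ring
    rw [this]
    refine le_trans (abs_add_le _ _) ?_
    rw [abs_neg, abs_neg]; linarith
  have ha2 : |(x 0 - θ₁) - (y 0 - θ₁)| ≤ dist x y := by
    rw [show (x 0 - θ₁) - (y 0 - θ₁) = x 0 - y 0 by ring]; exact hd0
  have ha3 : |(θ₂ - x 1) - (θ₂ - y 1)| ≤ dist x y := by
    rw [show (θ₂ - x 1) - (θ₂ - y 1) = -(x 1 - y 1) by ring, abs_neg]; exact hd1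
  have hdnn : (0:ℝ) ≤ dist x y := dist_nonneg
  rw [Real.dist_eq]
  have hdiff : Ff θ₁ θ₂ x - Ff θ₁ θ₂ y = c0/2 * ((qf (θ₂ - x 1 - x 0) - qf (θ₂ - y 1 - y 0))
      + (qf (x 0 - θ₁) - qf (y 0 - θ₁)) + (qf (θ₂ - x 1) - qf (θ₂ - y 1))) := by
    simp only [Ff]; ring
  rw [hdiff, abs_mul, abs_of_nonneg (by rw [c0]; norm_num : (0:ℝ) ≤ c0/2)]
  have habs : |(qf (θ₂ - x 1 - x 0) - qf (θ₂ - y 1 - y 0))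
      + (qf (x 0 - θ₁) - qf (y 0 - θ₁)) + (qf (θ₂ - x 1) - qf (θ₂ - y 1))|
      ≤ 2*11*(2*dist x y) + 2*6*(dist x y) + 2*6*(dist x y) := by
    refine le_trans (abs_add_le _ _) ?_
    refine le_trans (add_le_add (abs_add_le _ _) le_rfl) ?_
    have b1 : |qf (θ₂ - x 1 - x 0) - qf (θ₂ - y 1 - y 0)| ≤ 2*11*(2*dist x y) :=
      le_trans hq1 (by linarith)
    have b2 : |qf (x 0 - θ₁) - qf (y 0 - θ₁)| ≤ 2*6*(dist x y) :=
      le_trans hq2 (by linarith)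
    have b3 : |qf (θ₂ - x 1) - qf (θ₂ - y 1)| ≤ 2*6*(dist x y) :=
      le_trans hq3 (by linarith)
    linarith
  have hfin := mul_le_mul_of_nonneg_left habs (show (0:ℝ) ≤ c0/2 by rw [c0]; norm_num)
  refine le_trans hfin ?_
  simp only [NNReal.coe_one, one_mul]
  rw [c0]
  linarith

lemma Gf_lip (θ₁ θ₂ : ℝ) : LipschitzOnWith 1 (Gf θ₁ θ₂) (closedBall 0 5) := by
  apply LipschitzOnWith.of_dist_le_mul
  intro x _ y _
  rw [dist_eq_norm, dist_eq_norm]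
  have hd0 : |x 0 - y 0| ≤ ‖x - y‖ :=
    le_trans (le_of_eq (by rw [PiLp.sub_apply])) (euc2_coord_le (x - y) 0)
  have hd1 : |x 1 - y 1| ≤ ‖x - y‖ :=
    le_trans (le_of_eq (by rw [PiLp.sub_apply])) (euc2_coord_le (x - y) 1)
  have h1 : |rl (θ₂ - x 1 - x 0) - rl (θ₂ - y 1 - y 0)| ≤ 2 * ‖x - y‖ := by
    refine le_trans (rl_lip _ _) ?_
    rw [show (θ₂ - x 1 - x 0) - (θ₂ - y 1 - y 0) = -(x 1 - y 1) + -(x 0 - y 0) by ring]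
    refine le_trans (abs_add_le _ _) ?_
    rw [abs_neg, abs_neg]; linarith
  have h2 : |rl (x 0 - θ₁) - rl (y 0 - θ₁)| ≤ ‖x - y‖ := by
    refine le_trans (rl_lip _ _) ?_
    rw [show (x 0 - θ₁) - (y 0 - θ₁) = x 0 - y 0 by ring]; exact hd0
  have h3 : |rl (θ₂ - x 1) - rl (θ₂ - y 1)| ≤ ‖x - y‖ := by
    refine le_trans (rl_lip _ _) ?_
    rw [show (θ₂ - x 1) - (θ₂ - y 1) = -(x 1 - y 1) by ring, abs_neg]; exact hd1
  have hc0 : (0:ℝ) ≤ c0 := by rw [c0]; norm_num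
  have hnn : (0:ℝ) ≤ ‖x - y‖ := norm_nonneg _
  refine le_trans (euc2_norm_le _) ?_
  have e0 : (Gf θ₁ θ₂ x - Gf θ₁ θ₂ y) 0
      = c0 * ((rl (x 0 - θ₁) - rl (y 0 - θ₁)) - (rl (θ₂ - x 1 - x 0) - rl (θ₂ - y 1 - y 0))) := by
    simp only [Gf, PiLp.sub_apply, toE2_apply0]; ring
  have e1 : (Gf θ₁ θ₂ x - Gf θ₁ θ₂ y) 1
      = -(c0 * ((rl (θ₂ - x 1 - x 0) - rl (θ₂ - y 1 - y 0)) + (rl (θ₂ - x 1) - rl (θ₂ - y 1)))) := by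
    simp only [Gf, PiLp.sub_apply, toE2_apply1]; ring
  rw [e0, e1, abs_neg, abs_mul, abs_mul, abs_of_nonneg hc0]
  have b0 : |(rl (x 0 - θ₁) - rl (y 0 - θ₁)) - (rl (θ₂ - x 1 - x 0) - rl (θ₂ - y 1 - y 0))|
      ≤ 3 * ‖x - y‖ := by
    refine le_trans (abs_sub _ _) ?_
    linarith
  have b1 : |(rl (θ₂ - x 1 - x 0) - rl (θ₂ - y 1 - y 0)) + (rl (θ₂ - x 1) - rl (θ₂ - y 1))|
      ≤ 3 * ‖x - y‖ := by
    refine le_trans (abs_add_le _ _) ?_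
    linarith
  have hb0 := mul_le_mul_of_nonneg_left b0 hc0
  have hb1 := mul_le_mul_of_nonneg_left b1 hc0
  simp only [NNReal.coe_one, one_mul]
  rw [c0] at hb0 hb1 ⊢
  linarith

lemma Ff_nonneg (θ₁ θ₂ : ℝ) (w : Euc 2) : 0 ≤ Ff θ₁ θ₂ w := by
  simp only [Ff, c0]
  nlinarith [qf_nonneg (θ₂ - w 1 - w 0), qf_nonneg (w 0 - θ₁), qf_nonneg (θ₂ - w 1)]

lemma qf_of_nonpos {s : ℝ} (h : s ≤ 0) : qf s = 0 := by simp [qf, rl_of_nonpos h]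

lemma Ff_zero_q (θ₁ θ₂ : ℝ) (h1 : 0 ≤ θ₁) : Ff θ₁ θ₂ (toE2 0 θ₂) = 0 := by
  simp only [Ff, toE2_apply0, toE2_apply1]
  rw [qf_of_nonpos (by linarith : θ₂ - θ₂ - 0 ≤ 0),
    qf_of_nonpos (by linarith : (0:ℝ) - θ₁ ≤ 0),
    qf_of_nonpos (by linarith : θ₂ - θ₂ ≤ 0)]
  ring

lemma Ff_zero_p (θ₁ θ₂ : ℝ) (h1 : 0 ≤ θ₁) : Ff θ₁ θ₂ (toE2 θ₁ θ₂) = 0 := by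
  simp only [Ff, toE2_apply0, toE2_apply1]
  rw [qf_of_nonpos (by linarith : θ₂ - θ₂ - θ₁ ≤ 0),
    qf_of_nonpos (by linarith : θ₁ - θ₁ ≤ 0),
    qf_of_nonpos (by linarith : θ₂ - θ₂ ≤ 0)]
  ring

lemma gd_bound (θ₁ θ₂ : ℝ) (hθ₂pos : 0 < θ₂) (hθ₂le : θ₂ ≤ 1)
    (hθ₁pos : 0 < θ₁) (hθ₁le : θ₁ ≤ 0.025 * θ₂) (T : ℕ) (η : ℝ)
    (hT : 0 < T) (hη : 0 < η) (hη1 : η < 1) :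
    ‖gdOut (Ff θ₁ θ₂) η T - toE2 θ₁ θ₂‖ ≤ 2640 / (η * T) := by
  have hθ₁le' : θ₁ ≤ (1/40) * θ₂ := by nlinarith
  have hθ₁₂ : θ₁ ≤ θ₂ := by nlinarith
  rw [gdOut, gdAvg]
  have hc0 : c0 = 1/40 := rfl
  obtain ⟨w, hwdef⟩ : ∃ w : ℕ → Euc 2, w = gdIter 5 η (fun _ v => gradient (Ff θ₁ θ₂) v) :=
    ⟨_, rfl⟩
  rw [← hwdef]
  obtain ⟨ε, hεdef, hε0, hε40⟩ : ∃ ε : ℝ, ε = c0 * η ∧ 0 < ε ∧ ε ≤ 1/40 :=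
    ⟨c0 * η, rfl, by rw [hc0]; positivity, by rw [hc0]; nlinarith⟩
  have hw0 : w 0 = 0 := by rw [hwdef]; rfl
  have hw00 : w 0 0 = 0 := by rw [hw0]; rfl
  have hw01 : w 0 1 = 0 := by rw [hw0]; rfl
  have hrec : ∀ t, w (t+1) = projB 5 (w t - η • Gf θ₁ θ₂ (w t)) := by
    intro t
    rw [hwdef]
    show projB 5 (gdIter 5 η _ t - η • gradient (Ff θ₁ θ₂) (gdIter 5 η _ t)) = _
    rw [gradient_Ff]
  -- step equations, assuming the invariant at time t
  have hstep : ∀ t, (0 ≤ w t 0 ∧ w t 0 - θ₁ ≤ θ₂ ∧ 0 ≤ θ₂ - w t 1 ∧ θ₂ - w t 1 ≤ θ₂) →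
      (w (t+1) 0 = w t 0 + ε * (rl (θ₂ - w t 1 - w t 0) - rl (w t 0 - θ₁)) ∧
       w (t+1) 1 = w t 1 + ε * (rl (θ₂ - w t 1 - w t 0) + (θ₂ - w t 1))) := by
    intro t ⟨hX0, hXθ, hU0, hUθ⟩
    have hVle : rl (θ₂ - w t 1 - w t 0) ≤ θ₂ := by
      calc rl (θ₂ - w t 1 - w t 0) ≤ rl (θ₂ - w t 1) := rl_mono (by linarith)
        _ = θ₂ - w t 1 := rl_of_nonneg hU0
        _ ≤ θ₂ := hUθ
    have hAle : rl (w t 0 - θ₁) ≤ θ₂ := by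
      calc rl (w t 0 - θ₁) ≤ rl θ₂ := rl_mono hXθ
        _ = θ₂ := rl_of_nonneg (le_of_lt hθ₂pos)
    have hV0 := rl_nonneg (θ₂ - w t 1 - w t 0)
    have hA0 := rl_nonneg (w t 0 - θ₁)
    have hz0 : (w t - η • Gf θ₁ θ₂ (w t)) 0
        = w t 0 + ε * (rl (θ₂ - w t 1 - w t 0) - rl (w t 0 - θ₁)) := by
      simp only [Gf, PiLp.sub_apply, PiLp.smul_apply, smul_eq_mul, toE2_apply0]
      rw [hεdef]; ring
    have hz1 : (w t - η • Gf θ₁ θ₂ (w t)) 1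
        = w t 1 + ε * (rl (θ₂ - w t 1 - w t 0) + (θ₂ - w t 1)) := by
      simp only [Gf, PiLp.sub_apply, PiLp.smul_apply, smul_eq_mul, toE2_apply1]
      rw [hεdef, rl_of_nonneg hU0]; ring
    have hz0b : |(w t - η • Gf θ₁ θ₂ (w t)) 0| ≤ 2 := by
      rw [hz0, abs_le]
      constructor <;> nlinarith
    have hz1b : |(w t - η • Gf θ₁ θ₂ (w t)) 1| ≤ 2 := by
      rw [hz1, abs_le]
      constructor <;> nlinarith
    have hz5 : ‖w t - η • Gf θ₁ θ₂ (w t)‖ ≤ 5 :=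
      le_trans (euc2_norm_le _) (by linarith)
    have hproj : w (t+1) = w t - η • Gf θ₁ θ₂ (w t) := by
      rw [hrec t]
      simp only [projB]
      rw [if_pos hz5]
    rw [hproj]
    exact ⟨hz0, hz1⟩
  -- the invariant
  have hInv : ∀ t, 0 ≤ w t 0 ∧ w t 0 - θ₁ ≤ θ₂ ∧ 0 ≤ θ₂ - w t 1 ∧ θ₂ - w t 1 ≤ θ₂ := by
    intro t
    induction t with
    | zero =>
      rw [hw00, hw01]
      refine ⟨le_rfl, by linarith, by linarith, by linarith⟩
    | succ t ih =>
      obtain ⟨hX0, hXθ, hU0, hUθ⟩ := ih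
      obtain ⟨he0, he1⟩ := hstep t ⟨hX0, hXθ, hU0, hUθ⟩
      have hVle : rl (θ₂ - w t 1 - w t 0) ≤ θ₂ - w t 1 := by
        calc rl (θ₂ - w t 1 - w t 0) ≤ rl (θ₂ - w t 1) := rl_mono (by linarith)
          _ = θ₂ - w t 1 := rl_of_nonneg hU0
      have hV0 := rl_nonneg (θ₂ - w t 1 - w t 0)
      have hA0 := rl_nonneg (w t 0 - θ₁)
      have hAX : rl (w t 0 - θ₁) ≤ w t 0 := by
        calc rl (w t 0 - θ₁) ≤ rl (w t 0) := rl_mono (by linarith)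
          _ = w t 0 := rl_of_nonneg hX0
      refine ⟨?_, ?_, ?_, ?_⟩
      · rw [he0]; nlinarith
      · rw [he0]
        rcases le_or_gt (w t 0) θ₁ with h | h
        · rw [rl_of_nonpos (by linarith : w t 0 - θ₁ ≤ 0)]
          have : rl (θ₂ - w t 1 - w t 0) ≤ θ₂ := by linarith
          nlinarith
        · rw [rl_of_nonneg (by linarith : 0 ≤ w t 0 - θ₁)]
          have : rl (θ₂ - w t 1 - w t 0) ≤ θ₂ := by linarith
          nlinarith
      · rw [he1]; nlinarith
      · rw [he1]; nlinarith
  -- lower bound on U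
  have hUlb : ∀ t, (1 - 2*ε)^t * θ₂ ≤ θ₂ - w t 1 := by
    intro t
    induction t with
    | zero => rw [hw01]; simp
    | succ t ih =>
      obtain ⟨hX0, hXθ, hU0, hUθ⟩ := hInv t
      obtain ⟨_, he1⟩ := hstep t (hInv t)
      have hVle : rl (θ₂ - w t 1 - w t 0) ≤ θ₂ - w t 1 := by
        calc rl (θ₂ - w t 1 - w t 0) ≤ rl (θ₂ - w t 1) := rl_mono (by linarith)
          _ = θ₂ - w t 1 := rl_of_nonneg hU0
      have h2ε : (0:ℝ) ≤ 1 - 2*ε := by linarith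
      have : (1 - 2*ε)^(t+1) * θ₂ ≤ (1 - 2*ε) * (θ₂ - w t 1) := by
        rw [pow_succ]
        calc (1 - 2*ε)^t * (1 - 2*ε) * θ₂ = (1 - 2*ε) * ((1 - 2*ε)^t * θ₂) := by ring
          _ ≤ (1 - 2*ε) * (θ₂ - w t 1) := mul_le_mul_of_nonneg_left ih h2ε
      rw [he1]
      nlinarith
  -- the absorption time
  obtain ⟨τ, hτ1, hτ3⟩ : ∃ τ : ℕ, (1:ℝ)/4 ≤ ε * τ ∧ ε * (τ:ℝ) ≤ 1/4 + ε := by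
    refine ⟨Nat.ceil ((4*ε)⁻¹), ?_, ?_⟩
    · have h := Nat.le_ceil ((4*ε)⁻¹)
      have h2 := mul_le_mul_of_nonneg_left h (le_of_lt hε0)
      calc (1:ℝ)/4 = ε * (4*ε)⁻¹ := by field_simp
        _ ≤ ε * (⌈(4*ε)⁻¹⌉₊:ℝ) := h2
    · have hτ2 : ((⌈(4*ε)⁻¹⌉₊:ℕ):ℝ) ≤ (4*ε)⁻¹ + 1 :=
        le_of_lt (Nat.ceil_lt_add_one (by positivity))
      have h3 := mul_le_mul_of_nonneg_left hτ2 (le_of_lt hε0)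
      calc ε * ((⌈(4*ε)⁻¹⌉₊:ℕ):ℝ) ≤ ε * ((4*ε)⁻¹ + 1) := h3
        _ = ε * (4*ε)⁻¹ + ε := by ring
        _ = 1/4 + ε := by field_simp
  -- pre-absorption lower bound on U
  have hUpre : ∀ t, t < τ → (1/2) * θ₂ ≤ θ₂ - w t 1 := by
    intro t ht
    have hcast : (t:ℝ) + 1 ≤ (τ:ℝ) := by exact_mod_cast Nat.succ_le_of_lt ht
    have hp := one_add_mul_le_pow (show (-2:ℝ) ≤ -(2*ε) by linarith) t
    have hp' : 1 - 2*ε*(t:ℝ) ≤ (1 - 2*ε)^t := by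
      calc 1 - 2*ε*(t:ℝ) = 1 + (t:ℝ) * (-(2*ε)) := by ring
        _ ≤ (1 + -(2*ε))^t := hp
        _ = (1 - 2*ε)^t := by ring_nf
    have h2 : 2*ε*(t:ℝ) ≤ 1/2 := by nlinarith
    have h3 : (1/2:ℝ) ≤ (1 - 2*ε)^t := by linarith
    have := hUlb t
    nlinarith
  -- growth of X while below θ₁
  have hgrow : ∀ t, t ≤ τ → (∀ s, s < t → w s 0 < θ₁) → ε * t * ((2/5)*θ₂) ≤ w t 0 := by
    intro t
    induction t with
    | zero => intro _ _; rw [hw00]; simp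
    | succ t ih =>
      intro hle hsmall
      have iht := ih (by omega) (fun s hs => hsmall s (by omega))
      obtain ⟨hX0, hXθ, hU0, hUθ⟩ := hInv t
      obtain ⟨he0, _⟩ := hstep t (hInv t)
      have hXt : w t 0 < θ₁ := hsmall t (by omega)
      have hU2 : (1/2) * θ₂ ≤ θ₂ - w t 1 := hUpre t (by omega)
      have hA : rl (w t 0 - θ₁) = 0 := rl_of_nonpos (by linarith)
      have hV : (2/5) * θ₂ ≤ rl (θ₂ - w t 1 - w t 0) := by
        have := rl_ge (θ₂ - w t 1 - w t 0)
        nlinarith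
      rw [he0, hA]
      push_cast
      nlinarith
  -- absorption: once past τ, X stays ≥ θ₁
  have habs1 : ∀ t, θ₁ ≤ w t 0 → θ₁ ≤ w (t+1) 0 := by
    intro t ht
    obtain ⟨hX0, hXθ, hU0, hUθ⟩ := hInv t
    obtain ⟨he0, _⟩ := hstep t (hInv t)
    have hA : rl (w t 0 - θ₁) = w t 0 - θ₁ := rl_of_nonneg (by linarith)
    have hV0 := rl_nonneg (θ₂ - w t 1 - w t 0)
    rw [he0, hA]
    nlinarith
  have habsτ : ∀ t, τ ≤ t → θ₁ ≤ w t 0 := by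
    have hbase : ∃ s, s ≤ τ ∧ θ₁ ≤ w s 0 := by
      by_contra hcon
      push_neg at hcon
      have hg := hgrow τ le_rfl (fun s hs => hcon s (le_of_lt hs))
      have hτθ := hcon τ le_rfl
      have h25 : (0:ℝ) ≤ (2/5)*θ₂ := by linarith
      have hq := mul_le_mul_of_nonneg_right hτ1 h25
      linarith
    obtain ⟨s, hsτ, hs⟩ := hbase
    have hind : ∀ k, θ₁ ≤ w (s + k) 0 := by
      intro k
      induction k with
      | zero => simpa using hs
      | succ k ihk => exact habs1 (s + k) ihk
    intro t ht
    have heq : t = s + (t - s) := by omega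
    rw [heq]
    exact hind (t - s)
  -- geometric decay after absorption
  have hS : ∀ k, (w (τ + k) 0 - θ₁) + (θ₂ - w (τ + k) 1) ≤ (1-ε)^k * (2*θ₂) := by
    intro k
    induction k with
    | zero =>
      obtain ⟨hX0, hXθ, hU0, hUθ⟩ := hInv τ
      simpa using by linarith
    | succ k ihk =>
      have habs := habsτ (τ + k) (by omega)
      obtain ⟨hX0, hXθ, hU0, hUθ⟩ := hInv (τ + k)
      obtain ⟨he0, he1⟩ := hstep (τ + k) (hInv (τ + k))
      have hA : rl (w (τ+k) 0 - θ₁) = w (τ+k) 0 - θ₁ := rl_of_nonneg (by linarith)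
      have heq : (w ((τ+k)+1) 0 - θ₁) + (θ₂ - w ((τ+k)+1) 1)
          = (1-ε) * ((w (τ+k) 0 - θ₁) + (θ₂ - w (τ+k) 1)) := by
        rw [he0, he1, hA]
        ring
      have h1ε : (0:ℝ) ≤ 1 - ε := by linarith
      show (w ((τ+k)+1) 0 - θ₁) + (θ₂ - w ((τ+k)+1) 1) ≤ (1-ε)^(k+1) * (2*θ₂)
      rw [heq, pow_succ]
      calc (1-ε) * ((w (τ+k) 0 - θ₁) + (θ₂ - w (τ+k) 1)) ≤ (1-ε) * ((1-ε)^k * (2*θ₂)) :=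
            mul_le_mul_of_nonneg_left ihk h1ε
        _ = (1-ε)^k * (1-ε) * (2*θ₂) := by ring
  -- per-iterate distance bound
  have hfinal : ∀ t, ‖w t - toE2 θ₁ θ₂‖ ≤ 2 * (1-ε)^(t - τ) := by
    intro t
    obtain ⟨hX0, hXθ, hU0, hUθ⟩ := hInv t
    have habs2 : τ ≤ t → |w t 0 - θ₁| + |w t 1 - θ₂| ≤ 2 * (1-ε)^(t-τ) := by
      intro h
      obtain ⟨k, rfl⟩ : ∃ k, t = τ + k := ⟨t - τ, by omega⟩
      have habs := habsτ (τ + k) (by omega)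
      have hSk := hS k
      have h1 : |w (τ+k) 0 - θ₁| = w (τ+k) 0 - θ₁ := abs_of_nonneg (by linarith)
      have h2 : |w (τ+k) 1 - θ₂| = θ₂ - w (τ+k) 1 := by
        rw [abs_of_nonpos (by linarith)]; ring
      have hk : τ + k - τ = k := by omega
      rw [h1, h2, hk]
      have hpow : (0:ℝ) ≤ (1-ε)^k := pow_nonneg (by linarith) k
      have hmul := mul_le_mul_of_nonneg_left hθ₂le hpow
      linarith
    have hbnd : |w t 0 - θ₁| + |w t 1 - θ₂| ≤ 2 * (1-ε)^(t-τ) := by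
      rcases lt_or_ge t τ with h | h
      · rw [Nat.sub_eq_zero_of_le (le_of_lt h), pow_zero, mul_one]
        have h1 : |w t 0 - θ₁| ≤ θ₂ := by
          rw [abs_le]; constructor <;> linarith
        have h2 : |w t 1 - θ₂| ≤ θ₂ := by
          rw [abs_le]; constructor <;> linarith
        linarith
      · exact habs2 h
    have hc1 : (w t - toE2 θ₁ θ₂) 0 = w t 0 - θ₁ := by
      rw [PiLp.sub_apply, toE2_apply0]
    have hc2 : (w t - toE2 θ₁ θ₂) 1 = w t 1 - θ₂ := by
      rw [PiLp.sub_apply, toE2_apply1]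
    calc ‖w t - toE2 θ₁ θ₂‖ ≤ |(w t - toE2 θ₁ θ₂) 0| + |(w t - toE2 θ₁ θ₂) 1| :=
          euc2_norm_le _
      _ = |w t 0 - θ₁| + |w t 1 - θ₂| := by rw [hc1, hc2]
      _ ≤ 2 * (1-ε)^(t-τ) := hbnd
  -- geometric sum bound
  have h1ε : (0:ℝ) ≤ 1 - ε := by linarith
  have h1ε1 : (1 - ε) ≠ 1 := by intro h; nlinarith [hε0]
  have hgsum : ∀ m : ℕ, ∑ k ∈ Finset.range m, (1-ε)^k ≤ 1/ε := by
    intro m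
    rw [geom_sum_eq h1ε1]
    have hpm : (0:ℝ) ≤ (1-ε)^m := pow_nonneg h1ε m
    have hpm1 : (1-ε)^m ≤ 1 := pow_le_one₀ h1ε (by linarith)
    have heq : ((1-ε)^m - 1)/((1-ε) - 1) = (1 - (1-ε)^m)/ε := by
      rw [show (1-ε) - 1 = -ε by ring, div_neg, ← neg_div, neg_sub]
    rw [heq, div_le_div_iff₀ hε0 hε0]
    have : (1 - (1-ε)^m) ≤ 1 := by linarith
    nlinarith
  -- sum of distances
  have hsum2 : ∑ t ∈ Finset.range T, ‖w t - toE2 θ₁ θ₂‖ ≤ 2*(τ:ℝ) + 2/ε := by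
    have hle : ∑ t ∈ Finset.range T, ‖w t - toE2 θ₁ θ₂‖
        ≤ ∑ t ∈ Finset.range T, 2*(1-ε)^(t-τ) :=
      Finset.sum_le_sum (fun t _ => hfinal t)
    refine le_trans hle ?_
    rcases le_or_gt T τ with h | h
    · have hbd : ∑ t ∈ Finset.range T, 2*(1-ε)^(t-τ) ≤ ∑ _t ∈ Finset.range T, (2:ℝ) := by
        apply Finset.sum_le_sum
        intro t _
        have := pow_le_one₀ h1ε (by linarith : 1-ε ≤ 1) (n := t - τ)
        linarith
      rw [Finset.sum_const, Finset.card_range, nsmul_eq_mul] at hbd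
      have hτT : (T:ℝ) ≤ (τ:ℝ) := by exact_mod_cast h
      have h2ε : (0:ℝ) ≤ 2/ε := by positivity
      calc _ ≤ (T:ℝ) * 2 := hbd
        _ ≤ 2*(τ:ℝ) + 2/ε := by linarith
    · obtain ⟨m, rfl⟩ : ∃ m, T = τ + m := ⟨T - τ, by omega⟩
      rw [Finset.sum_range_add]
      have hA : ∑ t ∈ Finset.range τ, 2*(1-ε)^(t-τ) ≤ 2*(τ:ℝ) := by
        have hper : ∀ t ∈ Finset.range τ, 2*(1-ε)^(t-τ) ≤ (2:ℝ) := by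
          intro t _
          have := pow_le_one₀ h1ε (by linarith : 1-ε ≤ 1) (n := t - τ)
          linarith
        calc ∑ t ∈ Finset.range τ, 2*(1-ε)^(t-τ) ≤ ∑ _t ∈ Finset.range τ, (2:ℝ) :=
              Finset.sum_le_sum hper
          _ = 2*(τ:ℝ) := by rw [Finset.sum_const, Finset.card_range, nsmul_eq_mul]; ring
      have hB : ∑ k ∈ Finset.range m, 2*(1-ε)^((τ + k)-τ) ≤ 2/ε := by
        have hrw : ∑ k ∈ Finset.range m, 2*(1-ε)^((τ + k)-τ)
            = 2 * ∑ k ∈ Finset.range m, (1-ε)^k := by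
          rw [Finset.mul_sum]
          apply Finset.sum_congr rfl
          intro k _
          rw [show (τ + k) - τ = k by omega]
        rw [hrw]
        have := hgsum m
        calc 2 * ∑ k ∈ Finset.range m, (1-ε)^k ≤ 2 * (1/ε) := by linarith
          _ = 2/ε := by ring
      linarith
  -- assemble everything
  have hTpos : (0:ℝ) < T := by exact_mod_cast hT
  have hgd : ((T:ℝ)⁻¹ • ∑ t ∈ Finset.range T, w t) - toE2 θ₁ θ₂
      = (T:ℝ)⁻¹ • ∑ t ∈ Finset.range T, (w t - toE2 θ₁ θ₂) := by
    rw [Finset.sum_sub_distrib, smul_sub]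
    congr 1
    rw [Finset.sum_const, Finset.card_range]
    rw [← Nat.cast_smul_eq_nsmul ℝ]
    rw [smul_smul, inv_mul_cancel₀ (ne_of_gt hTpos), one_smul]
  rw [hgd, norm_smul, Real.norm_eq_abs, abs_of_pos (by positivity)]
  have hns := norm_sum_le (Finset.range T) (fun t => w t - toE2 θ₁ θ₂)
  have hb : ‖∑ t ∈ Finset.range T, (w t - toE2 θ₁ θ₂)‖ ≤ 2*(τ:ℝ) + 2/ε :=
    le_trans hns hsum2
  have hinv40 : (40:ℝ) ≤ 1/ε := by rw [le_div_iff₀ hε0]; nlinarith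
  have h2τ : 2*(τ:ℝ) + 2/ε ≤ 3/ε := by
    have expand : (2*(τ:ℝ) + 2/ε) * ε = 2*(ε*(τ:ℝ)) + 2 := by
      field_simp
    have key : (2*(τ:ℝ) + 2/ε) * ε ≤ 3 := by
      rw [expand]; linarith
    exact (le_div_iff₀ hε0).mpr key
  have hηT : (0:ℝ) < η * T := mul_pos hη hTpos
  calc (T:ℝ)⁻¹ * ‖∑ t ∈ Finset.range T, (w t - toE2 θ₁ θ₂)‖
      ≤ (T:ℝ)⁻¹ * (3/ε) := by
        apply mul_le_mul_of_nonneg_left (le_trans hb h2τ) (by positivity)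
    _ = 120 / (η * T) := by
        rw [hεdef, hc0]
        field_simp
        ring
    _ ≤ 2640 / (η * T) := by
        rw [div_le_div_iff₀ hηT hηT]
        nlinarith

theorem stmt5 (θ₁ θ₂ : ℝ) (hθ₂pos : 0 < θ₂) (hθ₂le : θ₂ ≤ 1)
    (hθ₁pos : 0 < θ₁) (hθ₁le : θ₁ ≤ 0.025 * θ₂) :
    ∃ F : Euc 2 → ℝ,
      (∀ w ∈ closedBall (0 : Euc 2) 5, 0 ≤ F w) ∧
      ConvexOn ℝ (closedBall 0 5) F ∧
      LipschitzOnWith 1 F (closedBall 0 5) ∧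
      LipschitzOnWith 1 (fun w => gradient F w) (closedBall 0 5) ∧
      F (toE2 0 θ₂) = 0 ∧ F (toE2 θ₁ θ₂) = 0 ∧
      ∀ (T : ℕ) (η : ℝ), 0 < T → 0 < η → η < 1 →
        ‖gdOut F η T - toE2 θ₁ θ₂‖ ≤ 2640 / (η * T) := by
  have hθ₁₂ : θ₁ ≤ θ₂ := by nlinarith
  refine ⟨Ff θ₁ θ₂, fun w _ => Ff_nonneg θ₁ θ₂ w, Ff_convex θ₁ θ₂,
    Ff_lip θ₁ θ₂ (le_of_lt hθ₁pos) hθ₁₂ hθ₂le, ?_,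
    Ff_zero_q θ₁ θ₂ (le_of_lt hθ₁pos), Ff_zero_p θ₁ θ₂ (le_of_lt hθ₁pos),
    fun T η hT hη hη1 => gd_bound θ₁ θ₂ hθ₂pos hθ₂le hθ₁pos hθ₁le T η hT hη hη1⟩
  have hfun : (fun w => gradient (Ff θ₁ θ₂) w) = Gf θ₁ θ₂ := funext (gradient_Ff θ₁ θ₂)
  rw [hfun]
  exact Gf_lip θ₁ θ₂

end
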